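/- For every y ∈ [0,2) ∩ ℤ[φ] there exists n ≥ 0 such that Rⁿ(y) belongs to the eight-element set {0, 1, 2−φ, φ, φ−1, 3φ−3, 3−φ, 5−3φ}. Moreover this set decomposes into periodic cycles of R: R(0) = 0, R(1) = 1, R(2−φ) = φ, R(φ) = 2−φ, and R(φ−1) = 3φ−3, R(3φ−3) = 3−φ, R(3−φ) = 5−3φ, R(5−3φ) = φ−1. -/
import Mathlib


open Set

noncomputable section

/-- The golden ratio `(1+√5)/2`. -/
def gold : ℝ := (1 + Real.sqrt 5) / 2

/-- The ring `ℤ[φ]`. -/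
def Zgold : Set ℝ := {x | ∃ m n : ℤ, x = m + n * gold}

/-- The renormalization map `R` on `[0,2)`. -/
def Rmap (y : ℝ) : ℝ :=
  if y < 2 - gold then gold ^ 3 * y
  else if y < 4 - 2 * gold then y + 2 * gold - 2
  else if y < 2 * gold - 2 then gold ^ 3 * y - 2 * gold
  else if y < gold then y - 2 * gold + 2
  else gold ^ 3 * y - 4 * gold

lemma goldSq : gold ^ 2 = gold + 1 := by
  have h5 : Real.sqrt 5 ^ 2 = 5 := Real.sq_sqrt (by norm_num)
  unfold gold; nlinarith [h5]

lemma goldGt : (1.61 : ℝ) < gold := by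
  have h5 : Real.sqrt 5 ^ 2 = 5 := Real.sq_sqrt (by norm_num)
  have h0 : 0 ≤ Real.sqrt 5 := Real.sqrt_nonneg 5
  unfold gold; nlinarith [h5, h0]

lemma goldLt : gold < (1.62 : ℝ) := by
  have h5 : Real.sqrt 5 ^ 2 = 5 := Real.sq_sqrt (by norm_num)
  have h0 : 0 ≤ Real.sqrt 5 := Real.sqrt_nonneg 5
  unfold gold; nlinarith [h5, h0]


lemma goldCube : gold ^ 3 = 2 * gold + 1 := by nlinarith [goldSq, goldGt]

lemma goldQuart : gold ^ 4 = 3 * gold + 2 := by nlinarith [goldSq, goldGt, goldCube]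

/-- The eight-element target set. -/
def Sper : Set ℝ := {0, 1, 2 - gold, gold, gold - 1, 3 * gold - 3, 3 - gold, 5 - 3 * gold}

set_option maxHeartbeats 2000000 in
lemma key (m n : ℤ) (h0 : (0:ℝ) ≤ (m:ℝ) + (n:ℝ) * gold) (h2 : (m:ℝ) + (n:ℝ) * gold < 2) :
    ∃ (j : ℕ) (m' n' : ℤ), Rmap^[j] ((m:ℝ) + (n:ℝ) * gold) = (m':ℝ) + (n':ℝ) * gold ∧
      (0:ℝ) ≤ (m':ℝ) + (n':ℝ) * gold ∧ ((m':ℝ) + (n':ℝ) * gold) < 2 ∧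
      |((m':ℝ) + (n':ℝ)) - (n':ℝ) * gold| ≤
        (2 * gold - 3) * |((m:ℝ) + (n:ℝ)) - (n:ℝ) * gold| + 2 * gold := by
  have hsq := goldSq
  have hg1 := goldGt
  have hg2 := goldLt
  set y : ℝ := (m:ℝ) + (n:ℝ) * gold with hy
  set c : ℝ := ((m:ℝ) + (n:ℝ)) - (n:ℝ) * gold with hc
  have habs1 : c ≤ |c| := le_abs_self c
  have habs2 : -|c| ≤ c := neg_abs_le c
  have h32 : (0:ℝ) ≤ 2 * gold - 3 := by nlinarith
  have h3 := goldCube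
  have h4 := goldQuart
  have hg3 : (0:ℝ) < gold ^ 3 := by nlinarith
  rcases lt_or_ge y (2 - gold) with hb1 | hb1
  · -- branch 1
    refine ⟨1, m + 2 * n, 2 * m + 3 * n, ?_, ?_, ?_, ?_⟩
    · rw [Function.iterate_one, Rmap, if_pos hb1]
      push_cast
      linear_combination ((m:ℝ) + 2*(n:ℝ) + (m:ℝ)*gold + (n:ℝ)*gold + (n:ℝ)*gold^2) * hsq
    · push_cast
      have : ((m:ℝ) + 2*(n:ℝ)) + (2*(m:ℝ) + 3*(n:ℝ)) * gold = gold^3 * y := by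
        rw [hy]; push_cast
        linear_combination (-((m:ℝ) + 2*(n:ℝ) + (m:ℝ)*gold + (n:ℝ)*gold + (n:ℝ)*gold^2)) * hsq
      push_cast at this ⊢
      nlinarith [this]
    · push_cast
      have : ((m:ℝ) + 2*(n:ℝ)) + (2*(m:ℝ) + 3*(n:ℝ)) * gold = gold^3 * y := by
        rw [hy]; push_cast
        linear_combination (-((m:ℝ) + 2*(n:ℝ) + (m:ℝ)*gold + (n:ℝ)*gold + (n:ℝ)*gold^2)) * hsq
      nlinarith [this]
    · push_cast
      have he : ((m:ℝ) + 2*(n:ℝ) + (2*(m:ℝ) + 3*(n:ℝ))) - (2*(m:ℝ) + 3*(n:ℝ)) * gold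
          = (3 - 2 * gold) * c + 0 := by
        rw [hc]; linear_combination (-2*(n:ℝ)) * hsq
      rw [he, abs_le]
      constructor <;> nlinarith [mul_nonneg h32 (sub_nonneg.mpr habs1),
        mul_nonneg h32 (by linarith : (0:ℝ) ≤ |c| + c)]
  · rcases lt_or_ge y (4 - 2 * gold) with hb2 | hb2
    · -- branch 2 then branch 5
      have hy1g : gold ≤ y + 2 * gold - 2 := by linarith
      have hy1u : y + 2 * gold - 2 < 2 := by linarith
      have hstep1 : Rmap y = y + 2 * gold - 2 := by
        rw [Rmap, if_neg (not_lt.mpr hb1), if_pos hb2]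
      have hstep2 : Rmap (y + 2 * gold - 2) = gold ^ 3 * (y + 2 * gold - 2) - 4 * gold := by
        rw [Rmap, if_neg (by push_neg; nlinarith), if_neg (by push_neg; nlinarith),
          if_neg (by push_neg; nlinarith), if_neg (not_lt.mpr hy1g)]
      refine ⟨2, m + 2 * n + 2, 2 * m + 3 * n - 2, ?_, ?_, ?_, ?_⟩
      · rw [show (2:ℕ) = 1 + 1 from rfl, Function.iterate_add_apply, Function.iterate_one,
          hstep1, hstep2, hy]
        push_cast
        linear_combination (2 + (m:ℝ) + 2*(n:ℝ) + (m:ℝ)*gold + (n:ℝ)*gold + 2*gold^2 + (n:ℝ)*gold^2) * hsq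
      · have hval : ((m:ℝ) + 2*(n:ℝ) + 2) + (2*(m:ℝ) + 3*(n:ℝ) - 2) * gold
            = gold ^ 3 * (y + 2 * gold - 2) - 4 * gold := by
          rw [hy]; push_cast
          linear_combination (-(2 + (m:ℝ) + 2*(n:ℝ) + (m:ℝ)*gold + (n:ℝ)*gold + 2*gold^2 + (n:ℝ)*gold^2)) * hsq
        have hlb := mul_le_mul_of_nonneg_left hy1g hg3.le
        push_cast
        nlinarith [hval, hlb, h3, h4, hg1, hg2]
      · have hval : ((m:ℝ) + 2*(n:ℝ) + 2) + (2*(m:ℝ) + 3*(n:ℝ) - 2) * gold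
            = gold ^ 3 * (y + 2 * gold - 2) - 4 * gold := by
          rw [hy]; push_cast
          linear_combination (-(2 + (m:ℝ) + 2*(n:ℝ) + (m:ℝ)*gold + (n:ℝ)*gold + 2*gold^2 + (n:ℝ)*gold^2)) * hsq
        have hub := mul_lt_mul_of_pos_left hy1u hg3
        push_cast
        nlinarith [hval, hub, h3, h4, hg1, hg2]
      · push_cast
        have he : ((m:ℝ) + 2*(n:ℝ) + 2 + (2*(m:ℝ) + 3*(n:ℝ) - 2)) - (2*(m:ℝ) + 3*(n:ℝ) - 2) * gold
            = (3 - 2 * gold) * c + 2 * gold := by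
          rw [hc]; linear_combination (-2*(n:ℝ)) * hsq
        rw [he, abs_le]
        constructor <;> nlinarith [mul_nonneg h32 (sub_nonneg.mpr habs1),
          mul_nonneg h32 (by linarith : (0:ℝ) ≤ |c| + c)]
    · rcases lt_or_ge y (2 * gold - 2) with hb3 | hb3
      · -- branch 3
        have hstep : Rmap y = gold ^ 3 * y - 2 * gold := by
          rw [Rmap, if_neg (not_lt.mpr hb1), if_neg (not_lt.mpr hb2), if_pos hb3]
        refine ⟨1, m + 2 * n, 2 * m + 3 * n - 2, ?_, ?_, ?_, ?_⟩
        · rw [Function.iterate_one, hstep, hy]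
          push_cast
          linear_combination ((m:ℝ) + 2*(n:ℝ) + (m:ℝ)*gold + (n:ℝ)*gold + (n:ℝ)*gold^2) * hsq
        · have hval : ((m:ℝ) + 2*(n:ℝ)) + (2*(m:ℝ) + 3*(n:ℝ) - 2) * gold = gold^3 * y - 2 * gold := by
            rw [hy]; push_cast
            linear_combination (-((m:ℝ) + 2*(n:ℝ) + (m:ℝ)*gold + (n:ℝ)*gold + (n:ℝ)*gold^2)) * hsq
          have hlb := mul_le_mul_of_nonneg_left hb2 hg3.le
          push_cast
          nlinarith [hval, hlb, h3, h4, hg1, hg2]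
        · have hval : ((m:ℝ) + 2*(n:ℝ)) + (2*(m:ℝ) + 3*(n:ℝ) - 2) * gold = gold^3 * y - 2 * gold := by
            rw [hy]; push_cast
            linear_combination (-((m:ℝ) + 2*(n:ℝ) + (m:ℝ)*gold + (n:ℝ)*gold + (n:ℝ)*gold^2)) * hsq
          have hub := mul_lt_mul_of_pos_left hb3 hg3
          push_cast
          nlinarith [hval, hub, h3, h4, hg1, hg2]
        · push_cast
          have he : ((m:ℝ) + 2*(n:ℝ) + (2*(m:ℝ) + 3*(n:ℝ) - 2)) - (2*(m:ℝ) + 3*(n:ℝ) - 2) * gold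
              = (3 - 2 * gold) * c + (2 * gold - 2) := by
            rw [hc]; linear_combination (-2*(n:ℝ)) * hsq
          rw [he, abs_le]
          constructor <;> nlinarith [mul_nonneg h32 (sub_nonneg.mpr habs1),
            mul_nonneg h32 (by linarith : (0:ℝ) ≤ |c| + c)]
      · rcases lt_or_ge y gold with hb4 | hb4
        · -- branch 4 then branch 1
          have hy1l : (0:ℝ) ≤ y - 2 * gold + 2 := by linarith
          have hy1u : y - 2 * gold + 2 < 2 - gold := by linarith
          have hstep1 : Rmap y = y - 2 * gold + 2 := by
            rw [Rmap, if_neg (not_lt.mpr hb1), if_neg (not_lt.mpr hb2),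
              if_neg (not_lt.mpr hb3), if_pos hb4]
          have hstep2 : Rmap (y - 2 * gold + 2) = gold ^ 3 * (y - 2 * gold + 2) := by
            rw [Rmap, if_pos hy1u]
          refine ⟨2, m + 2 * n - 2, 2 * m + 3 * n - 2, ?_, ?_, ?_, ?_⟩
          · rw [show (2:ℕ) = 1 + 1 from rfl, Function.iterate_add_apply, Function.iterate_one,
              hstep1, hstep2, hy]
            push_cast
            linear_combination (-2 + (m:ℝ) + 2*(n:ℝ) + (m:ℝ)*gold + (n:ℝ)*gold - 2*gold^2 + (n:ℝ)*gold^2) * hsq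
          · have hval : ((m:ℝ) + 2*(n:ℝ) - 2) + (2*(m:ℝ) + 3*(n:ℝ) - 2) * gold
                = gold ^ 3 * (y - 2 * gold + 2) := by
              rw [hy]; push_cast
              linear_combination (-(-2 + (m:ℝ) + 2*(n:ℝ) + (m:ℝ)*gold + (n:ℝ)*gold - 2*gold^2 + (n:ℝ)*gold^2)) * hsq
            have hlb := mul_nonneg hg3.le hy1l
            push_cast
            nlinarith [hval, hlb, h3, h4, hg1, hg2]
          · have hval : ((m:ℝ) + 2*(n:ℝ) - 2) + (2*(m:ℝ) + 3*(n:ℝ) - 2) * gold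
                = gold ^ 3 * (y - 2 * gold + 2) := by
              rw [hy]; push_cast
              linear_combination (-(-2 + (m:ℝ) + 2*(n:ℝ) + (m:ℝ)*gold + (n:ℝ)*gold - 2*gold^2 + (n:ℝ)*gold^2)) * hsq
            have hub := mul_lt_mul_of_pos_left hy1u hg3
            push_cast
            nlinarith [hval, hub, h3, h4, hg1, hg2]
          · push_cast
            have he : ((m:ℝ) + 2*(n:ℝ) - 2 + (2*(m:ℝ) + 3*(n:ℝ) - 2)) - (2*(m:ℝ) + 3*(n:ℝ) - 2) * gold
                = (3 - 2 * gold) * c + (2 * gold - 4) := by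
              rw [hc]; linear_combination (-2*(n:ℝ)) * hsq
            rw [he, abs_le]
            constructor <;> nlinarith [mul_nonneg h32 (sub_nonneg.mpr habs1),
              mul_nonneg h32 (by linarith : (0:ℝ) ≤ |c| + c)]
        · -- branch 5
          have hstep : Rmap y = gold ^ 3 * y - 4 * gold := by
            rw [Rmap, if_neg (by push_neg; nlinarith), if_neg (by push_neg; nlinarith),
              if_neg (by push_neg; nlinarith), if_neg (not_lt.mpr hb4)]
          refine ⟨1, m + 2 * n, 2 * m + 3 * n - 4, ?_, ?_, ?_, ?_⟩
          · rw [Function.iterate_one, hstep, hy]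
            push_cast
            linear_combination ((m:ℝ) + 2*(n:ℝ) + (m:ℝ)*gold + (n:ℝ)*gold + (n:ℝ)*gold^2) * hsq
          · have hval : ((m:ℝ) + 2*(n:ℝ)) + (2*(m:ℝ) + 3*(n:ℝ) - 4) * gold = gold^3 * y - 4 * gold := by
              rw [hy]; push_cast
              linear_combination (-((m:ℝ) + 2*(n:ℝ) + (m:ℝ)*gold + (n:ℝ)*gold + (n:ℝ)*gold^2)) * hsq
            have hlb := mul_le_mul_of_nonneg_left hb4 hg3.le
            push_cast
            nlinarith [hval, hlb, h3, h4, hg1, hg2]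
          · have hval : ((m:ℝ) + 2*(n:ℝ)) + (2*(m:ℝ) + 3*(n:ℝ) - 4) * gold = gold^3 * y - 4 * gold := by
              rw [hy]; push_cast
              linear_combination (-((m:ℝ) + 2*(n:ℝ) + (m:ℝ)*gold + (n:ℝ)*gold + (n:ℝ)*gold^2)) * hsq
            have hub := mul_lt_mul_of_pos_left h2 hg3
            push_cast
            nlinarith [hval, hub, h3, h4, hg1, hg2]
          · push_cast
            have he : ((m:ℝ) + 2*(n:ℝ) + (2*(m:ℝ) + 3*(n:ℝ) - 4)) - (2*(m:ℝ) + 3*(n:ℝ) - 4) * gold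
                = (3 - 2 * gold) * c + (4 * gold - 4) := by
              rw [hc]; linear_combination (-2*(n:ℝ)) * hsq
            rw [he, abs_le]
            constructor <;> nlinarith [mul_nonneg h32 (sub_nonneg.mpr habs1),
              mul_nonneg h32 (by linarith : (0:ℝ) ≤ |c| + c)]


set_option maxHeartbeats 2000000 in
lemma base (m n : ℤ) (h0 : (0:ℝ) ≤ (m:ℝ) + (n:ℝ) * gold) (h2 : (m:ℝ) + (n:ℝ) * gold < 2)
    (hc : |((m:ℝ) + (n:ℝ)) - (n:ℝ) * gold| ≤ 2 * gold + 1 + 1/10) :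
    ∃ k : ℕ, Rmap^[k] ((m:ℝ) + (n:ℝ) * gold) ∈ Sper := by
  have hg1 := goldGt
  have hg2 := goldLt
  have hsq := goldSq
  have h3 := goldCube
  have h4 := goldQuart
  rw [abs_le] at hc
  obtain ⟨hcl, hcr⟩ := hc
  have hn1 : -1 ≤ n := by
    by_contra h
    push_neg at h
    have hn : (n:ℝ) ≤ -2 := by exact_mod_cast (by omega : n ≤ -2)
    nlinarith [mul_le_mul_of_nonneg_right hn (by linarith : (0:ℝ) ≤ 2*gold - 1)]
  have hn2 : n ≤ 2 := by
    by_contra h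
    push_neg at h
    have hn : (3:ℝ) ≤ (n:ℝ) := by exact_mod_cast (by omega : (3:ℤ) ≤ n)
    nlinarith [mul_le_mul_of_nonneg_right hn (by linarith : (0:ℝ) ≤ 2*gold - 1)]
  interval_cases n
  · -- n = -1
    push_cast at h0 h2 hcl hcr
    have hm1 : 1 < m := by exact_mod_cast (by nlinarith : (1:ℝ) < (m:ℝ))
    have hm2 : m < 4 := by exact_mod_cast (by nlinarith : (m:ℝ) < (4:ℝ))
    interval_cases m
    · refine ⟨0, ?_⟩
      rw [Function.iterate_zero, id_eq]
      simp only [Sper, mem_insert_iff, mem_singleton_iff]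
      right; right; left; push_cast; ring
    · refine ⟨0, ?_⟩
      rw [Function.iterate_zero, id_eq]
      simp only [Sper, mem_insert_iff, mem_singleton_iff]
      right; right; right; right; right; right; left; push_cast; ring
  · -- n = 0
    push_cast at h0 h2 hcl hcr
    have hm1 : -1 < m := by exact_mod_cast (by nlinarith : (-1:ℝ) < (m:ℝ))
    have hm2 : m < 2 := by exact_mod_cast (by nlinarith : (m:ℝ) < (2:ℝ))
    interval_cases m
    · refine ⟨0, ?_⟩
      rw [Function.iterate_zero, id_eq]
      simp only [Sper, mem_insert_iff, mem_singleton_iff]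
      left; push_cast; ring
    · refine ⟨0, ?_⟩
      rw [Function.iterate_zero, id_eq]
      simp only [Sper, mem_insert_iff, mem_singleton_iff]
      right; left; push_cast; ring
  · -- n = 1
    push_cast at h0 h2 hcl hcr
    have hm1 : -2 < m := by exact_mod_cast (by nlinarith : (-2:ℝ) < (m:ℝ))
    have hm2 : m < 1 := by exact_mod_cast (by nlinarith : (m:ℝ) < (1:ℝ))
    interval_cases m
    · refine ⟨0, ?_⟩
      rw [Function.iterate_zero, id_eq]
      simp only [Sper, mem_insert_iff, mem_singleton_iff]
      right; right; right; right; left; push_cast; ring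
    · refine ⟨0, ?_⟩
      rw [Function.iterate_zero, id_eq]
      simp only [Sper, mem_insert_iff, mem_singleton_iff]
      right; right; right; left; push_cast; ring
  · -- n = 2
    push_cast at h0 h2 hcl hcr
    have hm1 : -4 < m := by exact_mod_cast (by nlinarith : (-4:ℝ) < (m:ℝ))
    have hm2 : m < -1 := by exact_mod_cast (by nlinarith : (m:ℝ) < (-1:ℝ))
    interval_cases m
    · -- y = 2*gold - 3, one step to 1
      refine ⟨1, ?_⟩
      rw [Function.iterate_one]
      have hb : ((-3:ℤ):ℝ) + ((2:ℤ):ℝ) * gold < 2 - gold := by push_cast; nlinarith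
      rw [Rmap, if_pos hb]
      have hval : gold ^ 3 * (((-3:ℤ):ℝ) + ((2:ℤ):ℝ) * gold) = 1 := by
        push_cast; linear_combination (2*gold^2 - gold + 1) * hsq
      rw [hval]
      simp [Sper]
    · -- y = 2*gold - 2, one step to 0
      refine ⟨1, ?_⟩
      rw [Function.iterate_one]
      have hb1 : ¬ (((-2:ℤ):ℝ) + ((2:ℤ):ℝ) * gold < 2 - gold) := by
        push_neg; push_cast; nlinarith
      have hb2 : ¬ (((-2:ℤ):ℝ) + ((2:ℤ):ℝ) * gold < 4 - 2 * gold) := by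
        push_neg; push_cast; nlinarith
      have hb3 : ¬ (((-2:ℤ):ℝ) + ((2:ℤ):ℝ) * gold < 2 * gold - 2) := by
        push_neg; push_cast; nlinarith
      have hb4 : ((-2:ℤ):ℝ) + ((2:ℤ):ℝ) * gold < gold := by push_cast; nlinarith
      rw [Rmap, if_neg hb1, if_neg hb2, if_neg hb3, if_pos hb4]
      have hval : ((-2:ℤ):ℝ) + ((2:ℤ):ℝ) * gold - 2 * gold + 2 = 0 := by push_cast; ring
      rw [hval]
      simp [Sper]

lemma descend : ∀ k : ℕ, ∀ m n : ℤ, (0:ℝ) ≤ (m:ℝ) + (n:ℝ) * gold →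
    (m:ℝ) + (n:ℝ) * gold < 2 →
    |((m:ℝ) + (n:ℝ)) - (n:ℝ) * gold| ≤ 2 * gold + 1 + 1/10 + k/10 →
    ∃ j : ℕ, Rmap^[j] ((m:ℝ) + (n:ℝ) * gold) ∈ Sper := by
  intro k
  induction k with
  | zero =>
    intro m n h0 h2 hc
    exact base m n h0 h2 (by simpa using hc)
  | succ k ih =>
    intro m n h0 h2 hc
    obtain ⟨j, m', n', hiter, h0', h2', hc'⟩ := key m n h0 h2
    have hg1 := goldGt
    have hg2 := goldLt
    have hbound : |((m':ℝ) + (n':ℝ)) - (n':ℝ) * gold| ≤ 2 * gold + 1 + 1/10 + k/10 := by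
      have hk : (0:ℝ) ≤ (k:ℝ) := Nat.cast_nonneg k
      have habs := abs_nonneg (((m:ℝ) + (n:ℝ)) - (n:ℝ) * gold)
      push_cast at hc
      nlinarith [hc', mul_nonneg (by linarith : (0:ℝ) ≤ 1.62 - gold) hk,
        mul_le_mul_of_nonneg_left hc (by linarith : (0:ℝ) ≤ 2*gold - 3)]
    obtain ⟨j', hj'⟩ := ih m' n' h0' h2' hbound
    exact ⟨j' + j, by rw [Function.iterate_add_apply, hiter]; exact hj'⟩

/-- Descent Lemma I: every point of `ℤ[φ] ∩ [0,2)` eventually lands in the eight-element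
set of `R`-periodic points, and that set decomposes into the indicated cycles. -/
theorem descent_lemma_I :
    (∀ y ∈ Set.Ico (0 : ℝ) 2, y ∈ Zgold → ∃ k : ℕ,
      Rmap^[k] y ∈ ({0, 1, 2 - gold, gold, gold - 1, 3 * gold - 3, 3 - gold, 5 - 3 * gold} : Set ℝ)) ∧
    Rmap 0 = 0 ∧ Rmap 1 = 1 ∧
    Rmap (2 - gold) = gold ∧ Rmap gold = 2 - gold ∧
    Rmap (gold - 1) = 3 * gold - 3 ∧ Rmap (3 * gold - 3) = 3 - gold ∧
    Rmap (3 - gold) = 5 - 3 * gold ∧ Rmap (5 - 3 * gold) = gold - 1 := by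
  have hg1 := goldGt
  have hg2 := goldLt
  have hsq := goldSq
  refine ⟨?_, ?_, ?_, ?_, ?_, ?_, ?_, ?_, ?_⟩
  · rintro y ⟨hy0, hy2⟩ hz
    obtain ⟨m, n, rfl⟩ := hz
    set c : ℝ := ((m:ℝ) + (n:ℝ)) - (n:ℝ) * gold with hcdef
    have hle := Nat.le_ceil (|c| * 10)
    have habs := abs_nonneg c
    have h := descend ⌈|c| * 10⌉₊ m n hy0 hy2 (by nlinarith [hle, habs])
    exact h
  · rw [Rmap, if_pos (by nlinarith : (0:ℝ) < 2 - gold)]; ring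
  · rw [Rmap, if_neg (not_lt.mpr (by nlinarith : (2:ℝ) - gold ≤ 1)),
      if_neg (not_lt.mpr (by nlinarith : (4:ℝ) - 2 * gold ≤ 1)),
      if_pos (by nlinarith : (1:ℝ) < 2 * gold - 2)]
    linear_combination (gold + 1) * hsq
  · rw [Rmap, if_neg (lt_irrefl _), if_pos (by nlinarith : (2:ℝ) - gold < 4 - 2 * gold)]
    ring
  · rw [Rmap, if_neg (not_lt.mpr (by nlinarith : (2:ℝ) - gold ≤ gold)),
      if_neg (not_lt.mpr (by nlinarith : (4:ℝ) - 2 * gold ≤ gold)),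
      if_neg (not_lt.mpr (by nlinarith : 2 * gold - 2 ≤ gold)),
      if_neg (lt_irrefl _)]
    linear_combination (gold^2 + gold + 2) * hsq
  · rw [Rmap, if_neg (not_lt.mpr (by nlinarith : (2:ℝ) - gold ≤ gold - 1)),
      if_pos (by nlinarith : gold - 1 < 4 - 2 * gold)]
    ring
  · rw [Rmap, if_neg (not_lt.mpr (by nlinarith : (2:ℝ) - gold ≤ 3 * gold - 3)),
      if_neg (not_lt.mpr (by nlinarith : (4:ℝ) - 2 * gold ≤ 3 * gold - 3)),
      if_neg (not_lt.mpr (by nlinarith : 2 * gold - 2 ≤ 3 * gold - 3)),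
      if_neg (not_lt.mpr (by nlinarith : gold ≤ 3 * gold - 3))]
    linear_combination (3 * gold^2 + 3) * hsq
  · rw [Rmap, if_neg (not_lt.mpr (by nlinarith : (2:ℝ) - gold ≤ 3 - gold)),
      if_neg (not_lt.mpr (by nlinarith : (4:ℝ) - 2 * gold ≤ 3 - gold)),
      if_neg (not_lt.mpr (by nlinarith : 2 * gold - 2 ≤ 3 - gold)),
      if_pos (by nlinarith : (3:ℝ) - gold < gold)]
    ring
  · rw [Rmap, if_pos (by nlinarith : (5:ℝ) - 3 * gold < 2 - gold)]
    linear_combination (-3 * gold^2 + 2 * gold - 1) * hsq
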